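/- arXiv:1602.02049 — 4 statements merged into one kernel-verified Lean document; each statement's English description precedes it below -/
import Mathlib

section
/- Let K be a field, let A ∈ K[x]^{m×n} be u-column reduced for a shift u ∈ ℤ^m, with no zero columns and with cdeg_u A = v. Then for any matrix B ∈ K[x]^{n×k} and any w ∈ ℤ^k, the v-column degrees of B satisfy cdeg_v B = w if and only if the u-column degrees of the product satisfy cdeg_u (A·B) = w. -/
open Polynomial Matrix

variable {K : Type*} [Field K]

/-- The degree of a polynomial, as an element of `WithBot ℤ` (`⊥` for the zero polynomial). -/
noncomputable def degZ (p : Polynomial K) : WithBot ℤ :=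
  p.degree.map fun n : ℕ => (n : ℤ)

/-- The shifted column degree `cdeg_u p = max_i (deg p_i + u_i)` of a vector of polynomials. -/
noncomputable def cdegS {m : Type*} [Fintype m] (u : m → ℤ) (p : m → Polynomial K) : WithBot ℤ :=
  Finset.univ.sup fun i => degZ (p i) + (u i : WithBot ℤ)

/-- The row degree of row `i` of a polynomial matrix. -/
noncomputable def rdeg {m n : Type*} [Fintype n] (P : Matrix m n (Polynomial K)) (i : m) :
    WithBot ℕ :=
  Finset.univ.sup fun j => (P i j).degree

/-- The shifted leading coefficient matrix `lcoeff (x^u · A · x^{-v})`. -/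
noncomputable def lcoeffS {m n : Type*} (u : m → ℤ) (A : Matrix m n (Polynomial K)) (v : n → ℤ) :
    Matrix m n K :=
  Matrix.of fun i j => if 0 ≤ v j - u i then (A i j).coeff (v j - u i).toNat else 0

/-- A matrix over `K` has full column rank if its columns are linearly independent over `K`. -/
def FullColRankK {m n : Type*} (M : Matrix m n K) : Prop :=
  LinearIndependent K fun j => fun i => M i j

/-- `A` is `u`-column reduced with `u`-column degrees `v`. -/
def IsColReducedWith {m n : Type*} [Fintype m] (u : m → ℤ) (A : Matrix m n (Polynomial K))
    (v : n → ℤ) : Prop :=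
  (∀ j, cdegS u (fun i => A i j) = (v j : WithBot ℤ)) ∧ FullColRankK (lcoeffS u A v)

/-- `A` is `u`-column reduced. -/
def IsColReducedS {m n : Type*} [Fintype m] (u : m → ℤ) (A : Matrix m n (Polynomial K)) : Prop :=
  ∃ v : n → ℤ, IsColReducedWith u A v

/-- `F` is column reduced with (ordinary) column degrees `d`. -/
def IsColReducedNat {m n : Type*} [Fintype m] (F : Matrix m n (Polynomial K)) (d : n → ℕ) : Prop :=
  IsColReducedWith (fun _ => (0 : ℤ)) F (fun j => (d j : ℤ))

/-- `N` is a (right) kernel basis of `F`. -/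
def IsKernelBasis {m n k : Type*} [Fintype n] [Fintype k] (F : Matrix m n (Polynomial K))
    (N : Matrix n k (Polynomial K)) : Prop :=
  (LinearIndependent (Polynomial K) fun j => fun i => N i j) ∧
  F * N = 0 ∧
  ∀ q : n → Polynomial K, F.mulVec q = 0 → ∃ p : k → Polynomial K, N.mulVec p = q

/-- `N` is an `s`-minimal kernel basis of `F`. -/
def IsMinimalKernelBasis {m n k : Type*} [Fintype n] [Fintype k] (F : Matrix m n (Polynomial K))
    (s : n → ℤ) (N : Matrix n k (Polynomial K)) : Prop :=
  IsKernelBasis F N ∧ IsColReducedS s N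

/-- `T` is a column basis of `F`. -/
def IsColBasis {m n r : Type*} [Fintype n] [Fintype r] (F : Matrix m n (Polynomial K))
    (T : Matrix m r (Polynomial K)) : Prop :=
  (LinearIndependent (Polynomial K) fun j => fun i => T i j) ∧
  ∀ q : m → Polynomial K, (∃ p, F.mulVec p = q) ↔ (∃ p, T.mulVec p = q)

/-- `H` is in (column) Hermite normal form. -/
def IsHermiteForm {n : ℕ} (H : Matrix (Fin n) (Fin n) (Polynomial K)) : Prop :=
  (∀ i j : Fin n, i < j → H i j = 0) ∧
  (∀ i : Fin n, (H i i).Monic) ∧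
  (∀ i j : Fin n, j < i → (H i j).degree < (H i i).degree)

/-- `H` is the Hermite normal form of `F`. -/
def IsHermiteFormOf {n : ℕ} (F H : Matrix (Fin n) (Fin n) (Polynomial K)) : Prop :=
  IsHermiteForm H ∧ ∃ U : Matrix (Fin n) (Fin n) (Polynomial K), IsUnit U.det ∧ F * U = H

lemma degZ_zero' : degZ (0 : Polynomial K) = ⊥ := by simp [degZ]

lemma degZ_eq_natDegree {p : Polynomial K} (hp : p ≠ 0) :
    degZ p = ((p.natDegree : ℤ) : WithBot ℤ) := by
  rw [degZ, Polynomial.degree_eq_natDegree hp, Nat.cast_withBot, WithBot.map_coe]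

lemma natDegree_le_of_degZ_add_coe_le {p : Polynomial K} {c d : ℤ}
    (h : degZ p + (c : WithBot ℤ) ≤ (d : WithBot ℤ)) (hp : p ≠ 0) :
    (p.natDegree : ℤ) + c ≤ d := by
  rw [degZ_eq_natDegree hp, ← WithBot.coe_add, WithBot.coe_le_coe] at h
  exact h

lemma cdegS_mulVec {m n : ℕ} (u : Fin m → ℤ) (v : Fin n → ℤ)
    (A : Matrix (Fin m) (Fin n) (Polynomial K))
    (hred : IsColReducedWith u A v) (p : Fin n → Polynomial K) :
    cdegS u (A.mulVec p) = cdegS v p := by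
  classical
  have hAij : ∀ i j, A i j ≠ 0 → ((A i j).natDegree : ℤ) + u i ≤ v j := by
    intro i j hij
    have h1 : degZ (A i j) + (u i : WithBot ℤ) ≤ cdegS u (fun i => A i j) := by
      unfold cdegS; exact Finset.le_sup (f := fun i' => degZ (A i' j) + (u i' : WithBot ℤ)) (Finset.mem_univ i)
    rw [hred.1 j] at h1
    exact natDegree_le_of_degZ_add_coe_le h1 hij
  have hmv : ∀ i, A.mulVec p i = ∑ j, A i j * p j := by
    intro i; simp [Matrix.mulVec, dotProduct]
  by_cases hp : p = 0
  · subst hp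
    simp [Matrix.mulVec_zero, cdegS, degZ]
  obtain ⟨j0, hj0⟩ : ∃ j, p j ≠ 0 := by
    by_contra h; push_neg at h; exact hp (funext h)
  have hle0 : degZ (p j0) + (v j0 : WithBot ℤ) ≤ cdegS v p := by
    unfold cdegS; exact Finset.le_sup (f := fun i => degZ (p i) + (v i : WithBot ℤ)) (Finset.mem_univ j0)
  have hne : cdegS v p ≠ ⊥ := by
    intro h
    rw [h, degZ_eq_natDegree hj0, ← WithBot.coe_add, le_bot_iff] at hle0
    exact WithBot.coe_ne_bot hle0
  obtain ⟨t, ht⟩ := WithBot.ne_bot_iff_exists.mp hne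
  -- ht : (t : WithBot ℤ) = cdegS v p
  have hpj : ∀ j, p j ≠ 0 → ((p j).natDegree : ℤ) + v j ≤ t := by
    intro j hj
    have h1 : degZ (p j) + (v j : WithBot ℤ) ≤ cdegS v p := by
      unfold cdegS; exact Finset.le_sup (f := fun i => degZ (p i) + (v i : WithBot ℤ)) (Finset.mem_univ j)
    rw [← ht] at h1
    exact natDegree_le_of_degZ_add_coe_le h1 hj
  set b : Fin n → K := fun j => if 0 ≤ t - v j then (p j).coeff (t - v j).toNat else 0 with hb
  -- attainment of the sup
  obtain ⟨j1, -, hj1⟩ := Finset.exists_mem_eq_sup (Finset.univ : Finset (Fin n))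
    ⟨j0, Finset.mem_univ j0⟩ (fun i => degZ (p i) + (v i : WithBot ℤ))
  have hj1' : (t : WithBot ℤ) = degZ (p j1) + (v j1 : WithBot ℤ) := by
    rw [ht]; unfold cdegS; exact hj1
  have hpj1 : p j1 ≠ 0 := by
    intro h
    rw [h, degZ_zero'] at hj1'
    simp at hj1'
  have hdeg1 : ((p j1).natDegree : ℤ) + v j1 = t := by
    rw [degZ_eq_natDegree hpj1, ← WithBot.coe_add] at hj1'
    exact_mod_cast hj1'.symm
  have hbj1 : b j1 ≠ 0 := by
    have h0 : (0:ℤ) ≤ t - v j1 := by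
      have := Int.natCast_nonneg (p j1).natDegree; omega
    have h1 : (t - v j1).toNat = (p j1).natDegree := by omega
    simp only [hb, if_pos h0, h1]
    exact Polynomial.leadingCoeff_ne_zero.mpr hpj1
  -- the key coefficient computation
  have hcoef : ∀ i, 0 ≤ t - u i →
      (A.mulVec p i).coeff (t - u i).toNat = ∑ j, lcoeffS u A v i j * b j := by
    intro i hi
    rw [hmv, Polynomial.finset_sum_coeff]
    refine Finset.sum_congr rfl fun j _ => ?_
    by_cases hpj0 : p j = 0
    · simp [hpj0, hb]
    by_cases hA0 : A i j = 0
    · simp [hA0, lcoeffS]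
    have h1 : ((A i j).natDegree : ℤ) ≤ v j - u i := by linarith [hAij i j hA0]
    have h2 : ((p j).natDegree : ℤ) ≤ t - v j := by linarith [hpj j hpj0]
    have hv : (0:ℤ) ≤ v j - u i := le_trans (Int.natCast_nonneg _) h1
    have hw : (0:ℤ) ≤ t - v j := le_trans (Int.natCast_nonneg _) h2
    have hsplit : (t - u i).toNat = (v j - u i).toNat + (t - v j).toNat := by omega
    rw [hsplit, Polynomial.coeff_mul_add_eq_of_natDegree_le (by omega) (by omega)]
    simp only [lcoeffS, Matrix.of_apply, hb]
    rw [if_pos hv, if_pos hw]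
  have hneg : ∀ i, t - u i < 0 → ∑ j, lcoeffS u A v i j * b j = 0 := by
    intro i hi
    refine Finset.sum_eq_zero fun j _ => ?_
    by_cases hbj : 0 ≤ t - v j
    · have hvu : ¬ (0 ≤ v j - u i) := by omega
      simp only [lcoeffS, Matrix.of_apply, if_neg hvu, zero_mul]
    · have hbz : b j = 0 := by simp only [hb, if_neg hbj]
      rw [hbz, mul_zero]
  -- from full column rank, some row has nonzero "leading coefficient combination"
  have hex : ∃ i, ∑ j, lcoeffS u A v i j * b j ≠ 0 := by
    by_contra h
    push_neg at h
    have hsum : ∑ j, b j • (fun i => lcoeffS u A v i j) = 0 := by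
      funext i
      have := h i
      simpa [Finset.sum_apply, mul_comm] using this
    exact hbj1 (Fintype.linearIndependent_iff.mp hred.2 b hsum j1)
  obtain ⟨i0, hi0⟩ := hex
  have hipos : 0 ≤ t - u i0 := by
    by_contra h
    push_neg at h
    exact hi0 (hneg i0 h)
  have hcne : (A.mulVec p i0).coeff (t - u i0).toNat ≠ 0 := by
    rw [hcoef i0 hipos]; exact hi0
  have hmvne : A.mulVec p i0 ≠ 0 := fun h => hcne (by simp [h])
  have hnatle : (t - u i0).toNat ≤ (A.mulVec p i0).natDegree :=
    Polynomial.le_natDegree_of_ne_zero hcne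
  rw [← ht]
  unfold cdegS
  apply le_antisymm
  · -- upper bound
    apply Finset.sup_le
    intro i _
    by_cases h0 : A.mulVec p i = 0
    · simp [h0, degZ_zero']
    rw [degZ_eq_natDegree h0, ← WithBot.coe_add, WithBot.coe_le_coe]
    have hne0 : ∑ j, A i j * p j ≠ 0 := by rw [← hmv]; exact h0
    obtain ⟨j2, -, hj2⟩ := Finset.exists_ne_zero_of_sum_ne_zero hne0
    have hA2 : A i j2 ≠ 0 := fun h => hj2 (by simp [h])
    have hp2 : p j2 ≠ 0 := fun h => hj2 (by simp [h])
    have h1 := hAij i j2 hA2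
    have h2 := hpj j2 hp2
    have hti : (0:ℤ) ≤ t - u i := by
      have := Int.natCast_nonneg (A i j2).natDegree
      have := Int.natCast_nonneg (p j2).natDegree
      omega
    have hdb : (A.mulVec p i).natDegree ≤ (t - u i).toNat := by
      rw [hmv]
      apply Polynomial.natDegree_sum_le_of_forall_le
      intro j _
      by_cases hz : A i j * p j = 0
      · simp [hz]
      have hAz : A i j ≠ 0 := fun h => hz (by simp [h])
      have hpz : p j ≠ 0 := fun h => hz (by simp [h])
      refine le_trans Polynomial.natDegree_mul_le ?_
      have h1' := hAij i j hAz
      have h2' := hpj j hpz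
      omega
    omega
  · -- lower bound
    refine le_trans ?_ (Finset.le_sup (f := fun i => degZ (A.mulVec p i) + (u i : WithBot ℤ))
      (Finset.mem_univ i0))
    show (t : WithBot ℤ) ≤ degZ (A.mulVec p i0) + (u i0 : WithBot ℤ)
    rw [degZ_eq_natDegree hmvne, ← WithBot.coe_add, WithBot.coe_le_coe]
    omega

/-- predictable degree property, Lemma 1.
If `A` is `u`-column reduced with no zero columns and `cdeg_u A = v`, then for any `B` and any
integer tuple `w`, `cdeg_v B = w` iff `cdeg_u (A · B) = w`. -/
theorem predictable_degree {m n k : ℕ} (u : Fin m → ℤ) (v : Fin n → ℤ)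
    (A : Matrix (Fin m) (Fin n) (Polynomial K))
    (hred : IsColReducedWith u A v)
    (hnz : ∀ j : Fin n, ∃ i, A i j ≠ 0)
    (B : Matrix (Fin n) (Fin k) (Polynomial K)) (w : Fin k → ℤ) :
    (∀ j, cdegS v (fun i => B i j) = (w j : WithBot ℤ)) ↔
      (∀ j, cdegS u (fun i => (A * B) i j) = (w j : WithBot ℤ)) := by
  have key : ∀ j, cdegS u (fun i => (A * B) i j) = cdegS v (fun i => B i j) := by
    intro j
    have h : (fun i => (A * B) i j) = A.mulVec (fun i => B i j) := by
      funext i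
      simp [Matrix.mul_apply, Matrix.mulVec, dotProduct]
    rw [h, cdegS_mulVec u v A hred]
  constructor
  · intro h j; rw [key j]; exact h j
  · intro h j; rw [← key j]; exact h j
end

section
/- Let K be a field and let F ∈ K[x]^{m×n} be partitioned as F = [F_u; F_d] with F_u its top m_1 rows and F_d its bottom m − m_1 rows. Let G_1 ∈ K[x]^{m_1×r} be a column basis of F_u and N ∈ K[x]^{n×k} a kernel basis of F_u. Then there exists a matrix V ∈ K[x]^{n×r} such that U = [V, N] ∈ K[x]^{n×(r+k)} is unimodular (in particular r + k = n), F_u·V = G_1, and consequently F·U has the block lower triangular form [[G_1, 0], [F_d·V, G_2]] with G_2 = F_d·N. Moreover, if F is square and nonsingular, then G_1 and G_2 are square and nonsingular. -/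
open Polynomial Matrix

variable {K : Type*} [Field K]

private lemma mulVec_inj_of_li' {R : Type*} [CommRing R] {m n : Type*} [Fintype n] [Fintype m]
    (T : Matrix m n R) (h : LinearIndependent R fun j => fun i => T i j) :
    Function.Injective T.mulVec := by
  have h0 : ∀ g : n → R, T.mulVec g = 0 → g = 0 := by
    intro g hg
    have := Fintype.linearIndependent_iff.mp h g ?_
    · funext j; exact this j
    · funext i
      have := congrFun hg i
      simpa [Matrix.mulVec, dotProduct, Finset.sum_apply, mul_comm] using this
  intro x y hxy
  have : T.mulVec (x - y) = 0 := by rw [Matrix.mulVec_sub, hxy, sub_self]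
  exact sub_eq_zero.mp (h0 _ this)

/-- Lemma 2: given a column basis `G₁` and a kernel basis `N` of the upper
part `F_u` of `F = [F_u; F_d]`, there is `V` such that `U = [V, N]` is unimodular (in particular
`r + k = n`), `F_u·V = G₁`, and `F·U = [[G₁, 0], [F_d·V, G₂]]` with `G₂ = F_d·N`.  Moreover if
`F` is square and nonsingular then `G₁` and `G₂` are square and nonsingular. -/
theorem column_basis_kernel_basis_triangularization {m1 m2 n r k : ℕ}
    (Fu : Matrix (Fin m1) (Fin n) (Polynomial K))
    (Fd : Matrix (Fin m2) (Fin n) (Polynomial K))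
    (G1 : Matrix (Fin m1) (Fin r) (Polynomial K)) (hG1 : IsColBasis Fu G1)
    (N : Matrix (Fin n) (Fin k) (Polynomial K)) (hN : IsKernelBasis Fu N) :
    r + k = n ∧
    ∃ V : Matrix (Fin n) (Fin r) (Polynomial K),
      Fu * V = G1 ∧
      (∃ W : Matrix (Fin r ⊕ Fin k) (Fin n) (Polynomial K),
        fromCols V N * W = 1 ∧ W * fromCols V N = 1) ∧
      fromRows Fu Fd * fromCols V N = fromBlocks G1 0 (Fd * V) (Fd * N) ∧
      (m1 + m2 = n → Function.Injective (fromRows Fu Fd).mulVec →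
        r = m1 ∧ k = m2 ∧
          Function.Injective G1.mulVec ∧ Function.Injective (Fd * N).mulVec) := by
  classical
  obtain ⟨hG1li, hG1span⟩ := hG1
  obtain ⟨hNli, hFuN, hNspan⟩ := hN
  -- construct V column by column
  have hcol : ∀ j : Fin r, ∃ p, Fu.mulVec p = fun i => G1 i j := by
    intro j
    refine (hG1span _).mpr ⟨Pi.single j 1, ?_⟩
    funext i
    simp [Matrix.mulVec, dotProduct, Pi.single_apply]
  choose p hp using hcol
  set V : Matrix (Fin n) (Fin r) (Polynomial K) := Matrix.of fun i j => p j i with hVdef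
  have hFuV : Fu * V = G1 := by
    apply Matrix.ext; intro i j
    have := congrFun (hp j) i
    simpa [Matrix.mul_apply, Matrix.mulVec, dotProduct, hVdef] using this
  set M := fromCols V N with hM
  have hG1inj : Function.Injective G1.mulVec := mulVec_inj_of_li' G1 hG1li
  have hNinj : Function.Injective N.mulVec := mulVec_inj_of_li' N hNli
  have hMinj : Function.Injective M.mulVec := by
    intro x y hxy
    have hsub : M.mulVec (x - y) = 0 := by rw [Matrix.mulVec_sub, hxy, sub_self]
    have hx : x - y = Sum.elim (fun i => (x - y) (Sum.inl i)) (fun i => (x - y) (Sum.inr i)) := by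
      funext i; cases i <;> rfl
    rw [hx, hM, fromCols_mulVec_sumElim] at hsub
    have h1 : G1.mulVec (fun i => (x - y) (Sum.inl i)) = 0 := by
      have := congrArg Fu.mulVec hsub
      rw [Matrix.mulVec_add, Matrix.mulVec_mulVec, Matrix.mulVec_mulVec, hFuV, hFuN] at this
      simpa using this
    have ha : (fun i => (x - y) (Sum.inl i)) = (0 : Fin r → Polynomial K) := by
      apply hG1inj; simpa using h1
    have h2 : N.mulVec (fun i => (x - y) (Sum.inr i)) = 0 := by
      rw [ha] at hsub; simpa using hsub
    have hb : (fun i => (x - y) (Sum.inr i)) = (0 : Fin k → Polynomial K) := by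
      apply hNinj; simpa using h2
    have hxy0 : x - y = 0 := by
      rw [hx, ha, hb]; funext i; cases i <;> simp
    exact sub_eq_zero.mp hxy0
  have hMsurj : Function.Surjective M.mulVec := by
    intro q
    obtain ⟨a, ha⟩ := (hG1span (Fu.mulVec q)).mp ⟨q, rfl⟩
    have hker : Fu.mulVec (q - V.mulVec a) = 0 := by
      rw [Matrix.mulVec_sub, Matrix.mulVec_mulVec, hFuV, ha, sub_self]
    obtain ⟨b, hb⟩ := hNspan _ hker
    refine ⟨Sum.elim a b, ?_⟩
    rw [hM, fromCols_mulVec_sumElim, hb]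
    abel
  have hMlin : ⇑M.mulVecLin = M.mulVec := funext fun v => M.mulVecLin_apply v
  have hMbij : Function.Bijective M.mulVecLin := by rw [hMlin]; exact ⟨hMinj, hMsurj⟩
  let e : (Fin r ⊕ Fin k → Polynomial K) ≃ₗ[Polynomial K] (Fin n → Polynomial K) :=
    LinearEquiv.ofBijective M.mulVecLin hMbij
  have he : ∀ v, e v = M.mulVec v := fun v => congrFun hMlin v
  have hrk : r + k = n := by
    have := card_eq_of_linearEquiv (Polynomial K) e
    simpa using this
  refine ⟨hrk, V, hFuV, ?_, ?_, ?_⟩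
  · -- unimodularity: two-sided inverse
    refine ⟨LinearMap.toMatrix' (e.symm :
      (Fin n → Polynomial K) →ₗ[Polynomial K] (Fin r ⊕ Fin k → Polynomial K)), ?_, ?_⟩
    · apply Matrix.toLin'.injective
      rw [Matrix.toLin'_mul, Matrix.toLin'_toMatrix', Matrix.toLin'_one]
      apply LinearMap.ext; intro v
      have : M.mulVec (e.symm v) = e (e.symm v) := (he _).symm
      simp only [LinearMap.comp_apply, LinearMap.id_apply, Matrix.toLin'_apply,
        LinearEquiv.coe_coe, ← hM, this, LinearEquiv.apply_symm_apply]
    · apply Matrix.toLin'.injective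
      rw [Matrix.toLin'_mul, Matrix.toLin'_toMatrix', Matrix.toLin'_one]
      apply LinearMap.ext; intro v
      have : M.mulVec v = e v := (he _).symm
      simp only [LinearMap.comp_apply, LinearMap.id_apply, Matrix.toLin'_apply,
        LinearEquiv.coe_coe, ← hM, this, LinearEquiv.symm_apply_apply]
  · rw [← hM, hM, fromRows_mul_fromCols, hFuV, hFuN]
  · intro hmn hFinj
    have hG2inj : Function.Injective (Fd * N).mulVec := by
      have h0 : ∀ b, (Fd * N).mulVec b = 0 → b = 0 := by
        intro b hb
        have hFu0 : (Fu * N).mulVec b = 0 := by rw [hFuN]; simp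
        have hF : (fromRows Fu Fd).mulVec (N.mulVec b) = 0 := by
          rw [fromRows_mulVec]
          rw [Matrix.mulVec_mulVec, Matrix.mulVec_mulVec]
          funext i; cases i with
          | inl i => simpa using congrFun hFu0 i
          | inr i => simpa using congrFun hb i
        have hN0 : N.mulVec b = 0 := by
          apply hFinj; simpa using hF
        apply hNinj; simpa using hN0
      intro x y hxy
      have : (Fd * N).mulVec (x - y) = 0 := by rw [Matrix.mulVec_sub, hxy, sub_self]
      exact sub_eq_zero.mp (h0 _ this)
    have hrle : r ≤ m1 := by
      have hinj : Function.Injective G1.mulVecLin := by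
        have : ⇑G1.mulVecLin = G1.mulVec := funext fun v => G1.mulVecLin_apply v
        rw [this]; exact hG1inj
      simpa using card_le_of_injective (Polynomial K) G1.mulVecLin hinj
    have hkle : k ≤ m2 := by
      have hinj : Function.Injective (Fd * N).mulVecLin := by
        have : ⇑(Fd * N).mulVecLin = (Fd * N).mulVec := funext fun v => (Fd * N).mulVecLin_apply v
        rw [this]; exact hG2inj
      simpa using card_le_of_injective (Polynomial K) (Fd * N).mulVecLin hinj
    refine ⟨by omega, by omega, hG1inj, hG2inj⟩
end

section
/- Let K be a field and F ∈ K[x]^{n×n} be nonsingular and column reduced, with Hermite normal form H whose diagonal entries have degrees s = (s_1,…,s_n); let s_max = max_i s_i and u = (s_max,…,s_max) ∈ ℤ^n. Suppose N ∈ K[x]^{2n×n} is a [−u,−s]-minimal kernel basis of the n×2n matrix [F, −I_n], partitioned as N = [N_u; N_d] with square n×n blocks. Then N_u is unimodular, the row degrees of N_d equal s, and N_d is unimodularly equivalent to H, i.e. N_d = H·V for some unimodular V ∈ K[x]^{n×n}; moreover F·N_u = N_d. -/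
open Polynomial Matrix

variable {K : Type*} [Field K]

/- ### Auxiliary lemmas ### -/

lemma degZ_bot_or_coe (p : Polynomial K) :
    (degZ p = ⊥ ∧ p = 0) ∨ ∃ b : ℕ, p.degree = (b : WithBot ℕ) ∧ degZ p = ((b : ℤ) : WithBot ℤ) := by
  by_cases h0 : p = 0
  · exact Or.inl ⟨by simp [degZ, h0], h0⟩
  · refine Or.inr ⟨p.natDegree, Polynomial.degree_eq_natDegree h0, ?_⟩
    rw [degZ, Polynomial.degree_eq_natDegree h0, Nat.cast_withBot, WithBot.map_coe]


lemma degZ_eq_bot_iff {p : Polynomial K} : degZ p = ⊥ ↔ p = 0 := by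
  rcases degZ_bot_or_coe p with ⟨h1, h2⟩ | ⟨b, h1, h2⟩
  · rw [h2]; simp [degZ, h1]
  · rw [h2]
    simp only [WithBot.coe_ne_bot, false_iff]
    intro h0
    rw [h0, Polynomial.degree_zero] at h1
    exact absurd h1.symm (by simp)

lemma degree_le_toNat_of_degZ_le {p : Polynomial K} {z : ℤ} (h : degZ p ≤ (z : WithBot ℤ)) :
    p.degree ≤ (z.toNat : WithBot ℕ) := by
  rcases degZ_bot_or_coe p with ⟨h1, h2⟩ | ⟨b, h1, h2⟩
  · simp [h2]
  · rw [h2, WithBot.coe_le_coe] at h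
    rw [h1, Nat.cast_le]
    omega

lemma eq_zero_of_degZ_le_neg {p : Polynomial K} {z : ℤ} (hz : z < 0)
    (h : degZ p ≤ (z : WithBot ℤ)) : p = 0 := by
  rcases degZ_bot_or_coe p with ⟨h1, h2⟩ | ⟨b, h1, h2⟩
  · exact h2
  · rw [h2, WithBot.coe_le_coe] at h
    omega

lemma degZ_le_of_degree_le {p : Polynomial K} {a : ℕ} (h : p.degree ≤ (a : WithBot ℕ)) :
    degZ p ≤ ((a : ℤ) : WithBot ℤ) := by
  rcases degZ_bot_or_coe p with ⟨h1, h2⟩ | ⟨b, h1, h2⟩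
  · simp [h1]
  · rw [h1, Nat.cast_le] at h
    rw [h2, WithBot.coe_le_coe]
    exact_mod_cast h

lemma le_degZ_of_coeff_ne_zero {p : Polynomial K} {a : ℕ} (h : p.coeff a ≠ 0) :
    ((a : ℤ) : WithBot ℤ) ≤ degZ p := by
  have hle := Polynomial.le_degree_of_ne_zero h
  rcases degZ_bot_or_coe p with ⟨h1, h2⟩ | ⟨b, h1, h2⟩
  · rw [Polynomial.degree_eq_bot.mpr h2] at hle; exact absurd hle (by simp)
  · rw [h1, Nat.cast_le] at hle
    rw [h2, WithBot.coe_le_coe]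
    exact_mod_cast hle

lemma degZ_nonneg {p : Polynomial K} (h : p ≠ 0) : (0 : WithBot ℤ) ≤ degZ p := by
  rcases degZ_bot_or_coe p with ⟨h1, h2⟩ | ⟨b, h1, h2⟩
  · exact absurd h2 h
  · rw [h2]
    exact_mod_cast (by positivity : (0:ℤ) ≤ (b:ℤ))

lemma coeff_eq_zero_of_degZ_lt {p : Polynomial K} {a : ℕ} (h : degZ p < ((a:ℤ) : WithBot ℤ)) :
    p.coeff a = 0 := by
  by_contra hc
  exact absurd (le_degZ_of_coeff_ne_zero hc) (not_le.mpr h)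

lemma coeff_mul_of_le {q r : Polynomial K} {a b : ℕ} (hq : q.degree ≤ (a : WithBot ℕ))
    (hr : r.degree ≤ (b : WithBot ℕ)) : (q*r).coeff (a+b) = q.coeff a * r.coeff b := by
  rw [Polynomial.coeff_mul]
  apply Finset.sum_eq_single (a, b)
  · rintro ⟨x, y⟩ hx hne
    rw [Finset.HasAntidiagonal.mem_antidiagonal] at hx
    simp only at *
    rcases lt_or_ge a x with hlt | hle
    · rw [Polynomial.coeff_eq_zero_of_degree_lt (lt_of_le_of_lt hq (by exact_mod_cast hlt)),
        zero_mul]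
    · have hne' : ¬(x = a ∧ y = b) := by simpa [Prod.ext_iff] using hne
      have hby : b < y := by omega
      rw [Polynomial.coeff_eq_zero_of_degree_lt (lt_of_le_of_lt hr (by exact_mod_cast hby)),
        mul_zero]
  · intro hnot
    exact absurd (by simp : ((a,b) : ℕ × ℕ) ∈ Finset.HasAntidiagonal.antidiagonal (a+b)) hnot

lemma degZ_natDegree {p : Polynomial K} (h : p ≠ 0) :
    degZ p = ((p.natDegree : ℤ) : WithBot ℤ) := by
  rw [degZ, Polynomial.degree_eq_natDegree h, Nat.cast_withBot, WithBot.map_coe]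

lemma degree_det_le_sum {n : ℕ} (M : Matrix (Fin n) (Fin n) (Polynomial K)) (d : Fin n → ℕ)
    (h : ∀ i j, (M i j).degree ≤ (d i : WithBot ℕ)) :
    M.det.degree ≤ ((∑ i, d i : ℕ) : WithBot ℕ) := by
  rw [Matrix.det_apply']
  refine le_trans (Polynomial.degree_sum_le _ _) (Finset.sup_le fun σ _ => ?_)
  refine le_trans (Polynomial.degree_mul_le _ _) ?_
  have h1 : Polynomial.degree (((Equiv.Perm.sign σ : ℤ) : Polynomial K)) ≤ 0 :=
    Polynomial.degree_intCast_le _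
  have h2 : (∏ i, M (σ i) i).degree ≤ ((∑ i, d i : ℕ) : WithBot ℕ) := by
    refine le_trans (Polynomial.degree_prod_le _ _) ?_
    refine le_trans (Finset.sum_le_sum (fun i _ => h (σ i) i)) ?_
    rw [← Equiv.sum_comp σ d, Nat.cast_sum]
  calc Polynomial.degree (((Equiv.Perm.sign σ : ℤ) : Polynomial K)) + (∏ i, M (σ i) i).degree
      ≤ 0 + ((∑ i, d i : ℕ) : WithBot ℕ) := add_le_add h1 h2
    _ = ((∑ i, d i : ℕ) : WithBot ℕ) := zero_add _

lemma degree_le_of_lt_succ {p : Polynomial K} {m : ℕ} (h : p.degree < ((m+1 : ℕ) : WithBot ℕ)) :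
    p.degree ≤ (m : WithBot ℕ) := by
  by_cases h0 : p = 0
  · simp [h0]
  · rw [Polynomial.degree_eq_natDegree h0] at h ⊢
    exact_mod_cast Nat.lt_succ_iff.mp (by exact_mod_cast h)

lemma wb_le_cancel {a : WithBot ℤ} {b c : ℤ} (hb : 0 ≤ b)
    (h : a + (b : WithBot ℤ) ≤ (c : WithBot ℤ)) : a ≤ (c : WithBot ℤ) := by
  induction a using WithBot.recBotCoe with
  | bot => exact bot_le
  | coe e =>
    rw [← WithBot.coe_add, WithBot.coe_le_coe] at h
    rw [WithBot.coe_le_coe]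
    omega

lemma wb_add_le_zero {a : WithBot ℤ} {b : ℤ} (h : a ≤ (b : WithBot ℤ)) :
    a + ((-b : ℤ) : WithBot ℤ) ≤ ((0:ℤ) : WithBot ℤ) := by
  induction a using WithBot.recBotCoe with
  | bot => rw [WithBot.bot_add]; exact bot_le
  | coe e =>
    rw [WithBot.coe_le_coe] at h
    rw [← WithBot.coe_add, WithBot.coe_le_coe]
    omega

lemma wb_shift_nonpos {a : WithBot ℤ} {b : ℤ} (ha : (0 : WithBot ℤ) ≤ a)
    (h : a + (b : WithBot ℤ) ≤ ((0:ℤ) : WithBot ℤ)) : b ≤ 0 := by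
  induction a using WithBot.recBotCoe with
  | bot => exact absurd ha (by simp)
  | coe e =>
    rw [← WithBot.coe_add, WithBot.coe_le_coe] at h
    have he : (0:ℤ) ≤ e := by exact_mod_cast ha
    omega

lemma le_cdegS {m : Type*} [Fintype m] (u : m → ℤ) (p : m → Polynomial K) (i : m) :
    degZ (p i) + (u i : WithBot ℤ) ≤ cdegS u p :=
  Finset.le_sup (f := fun i => degZ (p i) + (u i : WithBot ℤ)) (Finset.mem_univ i)

lemma degZ_add_le_iff {p : Polynomial K} {a b : ℤ} :
    degZ p + (a : WithBot ℤ) ≤ (b : WithBot ℤ) ↔ degZ p ≤ ((b - a : ℤ) : WithBot ℤ) := by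
  rcases degZ_bot_or_coe p with ⟨h1, _⟩ | ⟨c, _, h2⟩
  · simp [h1]
  · rw [h2, ← WithBot.coe_add, WithBot.coe_le_coe, WithBot.coe_le_coe]
    omega

lemma pdp {m k : Type*} [Fintype m] [Fintype k]
    (u : m → ℤ) (A : Matrix m k (Polynomial K)) (v : k → ℤ)
    (h : IsColReducedWith u A v) (p : k → Polynomial K) (j0 : k) :
    degZ (p j0) + (v j0 : WithBot ℤ) ≤ cdegS u (A.mulVec p) := by
  obtain ⟨h1, h2⟩ := h
  have hAle : ∀ i j, degZ (A i j) ≤ ((v j - u i : ℤ) : WithBot ℤ) := by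
    intro i j
    have := le_cdegS u (fun i => A i j) i
    rw [h1 j] at this
    exact degZ_add_le_iff.mp this
  by_cases hp0 : p j0 = 0
  · rw [degZ_eq_bot_iff.mpr hp0, WithBot.bot_add]
    exact bot_le
  have : Nonempty k := ⟨j0⟩
  obtain ⟨j1, -, hj1⟩ := Finset.exists_mem_eq_sup Finset.univ Finset.univ_nonempty
    (fun j => degZ (p j) + (v j : WithBot ℤ))
  have hj0le : degZ (p j0) + (v j0 : WithBot ℤ) ≤ degZ (p j1) + (v j1 : WithBot ℤ) :=
    hj1 ▸ le_cdegS v p j0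
  have hp1 : p j1 ≠ 0 := by
    intro h0
    rw [degZ_eq_bot_iff.mpr h0, WithBot.bot_add, le_bot_iff] at hj0le
    rcases degZ_bot_or_coe (p j0) with ⟨hb, hz⟩ | ⟨b, -, hb⟩
    · exact hp0 hz
    · rw [hb, ← WithBot.coe_add] at hj0le
      exact WithBot.coe_ne_bot hj0le
  set T : ℤ := (p j1).natDegree + v j1 with hT
  have hdegZ1 : degZ (p j1) = (((p j1).natDegree : ℤ) : WithBot ℤ) := degZ_natDegree hp1
  have hsupT : (Finset.univ.sup fun j => degZ (p j) + (v j : WithBot ℤ)) = (T : WithBot ℤ) := by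
    rw [hj1, hdegZ1, ← WithBot.coe_add]
  have hple : ∀ j, degZ (p j) ≤ ((T - v j : ℤ) : WithBot ℤ) := by
    intro j
    rw [← degZ_add_le_iff, ← hsupT]
    exact le_cdegS v p j
  set c : k → K := fun j => (p j).coeff (T - v j).toNat with hc
  have hc1 : c j1 ≠ 0 := by
    have : (T - v j1).toNat = (p j1).natDegree := by omega
    rw [hc]
    simp only [this]
    rw [Polynomial.coeff_natDegree]
    exact Polynomial.leadingCoeff_ne_zero.mpr hp1
  have hcoef : ∀ i, 0 ≤ T - u i →
      ((A.mulVec p) i).coeff ((T - u i).toNat) = ∑ j, lcoeffS u A v i j * c j := by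
    intro i hi
    rw [Matrix.mulVec, dotProduct, Polynomial.finset_sum_coeff]
    refine Finset.sum_congr rfl fun j _ => ?_
    by_cases hvu : 0 ≤ v j - u i
    · by_cases hTv : 0 ≤ T - v j
      · have hsplit : (T - u i).toNat = (v j - u i).toNat + (T - v j).toNat := by omega
        rw [hsplit, coeff_mul_of_le (degree_le_toNat_of_degZ_le (hAle i j))
          (degree_le_toNat_of_degZ_le (hple j))]
        simp only [lcoeffS, Matrix.of_apply]
        rw [if_pos hvu]
      · have hpj : p j = 0 := eq_zero_of_degZ_le_neg (by omega) (hple j)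
        have hcj : c j = 0 := by rw [hc]; simp [hpj]
        rw [hpj, hcj, mul_zero, mul_zero, Polynomial.coeff_zero]
    · have hAij : A i j = 0 := eq_zero_of_degZ_le_neg (by omega) (hAle i j)
      have hL0 : lcoeffS u A v i j = 0 := by
        simp only [lcoeffS, Matrix.of_apply]
        rw [if_neg hvu]
      rw [hAij, hL0, zero_mul, zero_mul, Polynomial.coeff_zero]
  -- use full column rank
  have hcne : c ≠ 0 := fun h0 => hc1 (congrFun h0 j1)
  have hex : ∃ i, (∑ j, lcoeffS u A v i j * c j) ≠ 0 := by
    by_contra hall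
    push_neg at hall
    apply hcne
    funext j
    refine Fintype.linearIndependent_iff.mp h2 c ?_ j
    funext i
    simp only [Finset.sum_apply, Pi.smul_apply, smul_eq_mul, Pi.zero_apply]
    rw [← hall i]
    exact Finset.sum_congr rfl fun j _ => mul_comm _ _
  obtain ⟨i0, hi0⟩ := hex
  obtain ⟨j2, -, hj2⟩ := Finset.exists_ne_zero_of_sum_ne_zero hi0
  have hL : lcoeffS u A v i0 j2 ≠ 0 := fun h0 => hj2 (by rw [h0, zero_mul])
  have hc2 : c j2 ≠ 0 := fun h0 => hj2 (by rw [h0, mul_zero])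
  have hvu2 : 0 ≤ v j2 - u i0 := by
    by_contra hlt
    exact hL (by simp only [lcoeffS, Matrix.of_apply]; rw [if_neg hlt])
  have hTv2 : 0 ≤ T - v j2 := by
    by_contra hlt
    have hpj : p j2 = 0 := eq_zero_of_degZ_le_neg (by omega) (hple j2)
    exact hc2 (by rw [hc]; simp [hpj])
  have hTu : 0 ≤ T - u i0 := by omega
  have hcoeffne : ((A.mulVec p) i0).coeff ((T - u i0).toNat) ≠ 0 := by
    rw [hcoef i0 hTu]; exact hi0
  have hdeg : (((T - u i0).toNat : ℤ) : WithBot ℤ) ≤ degZ ((A.mulVec p) i0) :=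
    le_degZ_of_coeff_ne_zero hcoeffne
  rw [Int.toNat_of_nonneg hTu] at hdeg
  have hfin : (T : WithBot ℤ) ≤ degZ ((A.mulVec p) i0) + (u i0 : WithBot ℤ) := by
    rcases degZ_bot_or_coe ((A.mulVec p) i0) with ⟨hb, -⟩ | ⟨b, -, hb⟩
    · rw [hb] at hdeg; exact absurd hdeg (by simp)
    · rw [hb, WithBot.coe_le_coe] at hdeg
      rw [hb, ← WithBot.coe_add, WithBot.coe_le_coe]
      omega
  calc degZ (p j0) + (v j0 : WithBot ℤ) ≤ (T : WithBot ℤ) := hsupT ▸ le_cdegS v p j0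
    _ ≤ degZ ((A.mulVec p) i0) + (u i0 : WithBot ℤ) := hfin
    _ ≤ cdegS u (A.mulVec p) := le_cdegS u _ i0

lemma cdegS_le {m : Type*} [Fintype m] {u : m → ℤ} {p : m → Polynomial K} {a : WithBot ℤ}
    (h : ∀ i, degZ (p i) + (u i : WithBot ℤ) ≤ a) : cdegS u p ≤ a :=
  Finset.sup_le fun i _ => h i

/-- Lemma 5: if `N = [N_u; N_d]` is a `[-u,-s]`-minimal kernel basis of
`[F, -I]`, then `N_u` is unimodular, `N_d` has row degrees `s`, `N_d` is unimodularly
equivalent to the Hermite normal form `H` of `F`, and `F · N_u = N_d`. -/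
theorem minimal_kernel_basis_gives_hermite {n : ℕ}
    (F : Matrix (Fin n) (Fin n) (Polynomial K))
    (hFns : F.det ≠ 0) (hFcr : IsColReducedS (fun _ => (0 : ℤ)) F)
    (H : Matrix (Fin n) (Fin n) (Polynomial K)) (hH : IsHermiteFormOf F H)
    (s : Fin n → ℕ) (hs : ∀ i, s i = (H i i).natDegree)
    (smax : ℕ) (hsmax : smax = Finset.univ.sup s)
    (Nu Nd : Matrix (Fin n) (Fin n) (Polynomial K))
    (hN : IsMinimalKernelBasis (fromCols F (-1))
      (Sum.elim (fun _ : Fin n => -(smax : ℤ)) (fun i => -(s i : ℤ)))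
      (fromRows Nu Nd)) :
    IsUnit Nu.det ∧
    (∀ i, rdeg Nd i = (s i : WithBot ℕ)) ∧
    (∃ V : Matrix (Fin n) (Fin n) (Polynomial K), IsUnit V.det ∧ H * V = Nd) ∧
    F * Nu = Nd := by
  obtain ⟨⟨hNli, hNker, hNgen⟩, v, hNred⟩ := hN
  obtain ⟨⟨hHlow, hHmon, hHdeglt⟩, U, hUdet, hFU⟩ := hH
  -- `F · N_u = N_d`
  have hFNu : F * Nu = Nd := by
    rw [fromCols_mul_fromRows, neg_one_mul] at hNker
    have h1 : F * Nu - Nd = 0 := by rw [sub_eq_add_neg]; exact hNker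
    exact sub_eq_zero.mp h1
  -- `N_u` has a right inverse `B`
  have key : ∀ j : Fin n, ∃ p : Fin n → Polynomial K, Nu.mulVec p = Pi.single j 1 := by
    intro j
    have hker : (fromCols F (-1)).mulVec (Sum.elim (Pi.single j 1) fun i => F i j) = 0 := by
      rw [fromCols_mulVec_sumElim, Matrix.mulVec_single, Matrix.neg_mulVec,
        Matrix.one_mulVec]
      funext i
      simp
    obtain ⟨p, hp⟩ := hNgen _ hker
    rw [fromRows_mulVec] at hp
    exact ⟨p, funext fun i => congrFun hp (Sum.inl i)⟩
  choose P hP using key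
  set B : Matrix (Fin n) (Fin n) (Polynomial K) := Matrix.of (fun i j => P j i) with hBdef
  have hNuB : Nu * B = 1 := by
    apply Matrix.ext
    intro i j
    rw [Matrix.mul_apply, Matrix.one_apply]
    have hthis := congrFun (hP j) i
    rw [Matrix.mulVec, dotProduct] at hthis
    rw [← Pi.single_apply j (1 : Polynomial K) i]
    exact hthis
  have hNuUnit : IsUnit Nu.det :=
    IsUnit.of_mul_eq_one B.det (by rw [← Matrix.det_mul, hNuB, Matrix.det_one])
  have hBNu : B * Nu = 1 := mul_eq_one_comm.mp hNuB
  have hBUnit : IsUnit B.det :=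
    IsUnit.of_mul_eq_one Nu.det (by rw [← Matrix.det_mul, hBNu, Matrix.det_one])
  -- the unimodular matrix `V`
  have hUUinv : U * U⁻¹ = 1 := Matrix.mul_nonsing_inv U hUdet
  have hUinvU : U⁻¹ * U = 1 := Matrix.nonsing_inv_mul U hUdet
  have hUinvUnit : IsUnit (U⁻¹).det :=
    IsUnit.of_mul_eq_one U.det (by rw [← Matrix.det_mul, hUinvU, Matrix.det_one])
  set V : Matrix (Fin n) (Fin n) (Polynomial K) := U⁻¹ * Nu with hVdef
  have hHV : H * V = Nd := by
    rw [hVdef, ← hFU, Matrix.mul_assoc F U (U⁻¹ * Nu), ← Matrix.mul_assoc U U⁻¹ Nu, hUUinv,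
      Matrix.one_mul, hFNu]
  have hVUnit : IsUnit V.det := by
    rw [hVdef, Matrix.det_mul]
    exact hUinvUnit.mul hNuUnit
  -- degrees of entries of `H`
  have hHii : ∀ i, (H i i).degree = ((s i : ℕ) : WithBot ℕ) := fun i => by
    rw [Polynomial.degree_eq_natDegree (hHmon i).ne_zero, hs i]
  have hHdegZ : ∀ i j, degZ (H i j) ≤ ((s i : ℤ) : WithBot ℤ) := by
    intro i j
    rcases lt_trichotomy i j with hij | hij | hij
    · rw [degZ_eq_bot_iff.mpr (hHlow i j hij)]
      exact bot_le
    · subst hij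
      exact degZ_le_of_degree_le (le_of_eq (hHii i))
    · exact degZ_le_of_degree_le (le_of_lt ((hHdeglt i j hij).trans_le (le_of_eq (hHii i))))
  have hsmaxle : ∀ i, (s i : ℤ) ≤ (smax : ℤ) := fun i => by
    have := Finset.le_sup (f := s) (Finset.mem_univ i)
    rw [← hsmax] at this
    exact_mod_cast this
  -- the column degrees of `F` are nonnegative
  obtain ⟨d, hd1, hd2⟩ := hFcr
  have hd0 : ∀ j, 0 ≤ d j := by
    intro j
    by_contra hneg
    push_neg at hneg
    have hcol : ∀ i, F i j = 0 := by
      intro i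
      have h1 := le_cdegS (fun _ => (0 : ℤ)) (fun i => F i j) i
      rw [hd1 j] at h1
      exact eq_zero_of_degZ_le_neg (by omega) (degZ_add_le_iff.mp h1)
    exact hFns (Matrix.det_eq_zero_of_column_eq_zero j hcol)
  -- degree bound for entries of `U`
  have hUle : ∀ i j, degZ (U i j) ≤ ((smax : ℤ) : WithBot ℤ) := by
    intro i j
    have hFe : F.mulVec (fun k => U k j) = fun r => H r j := by
      funext r
      rw [← hFU, Matrix.mul_apply]
      rfl
    have hp := pdp (fun _ => (0 : ℤ)) F d ⟨hd1, hd2⟩ (fun k => U k j) i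
    rw [hFe] at hp
    have hcd : cdegS (fun _ => (0 : ℤ)) (fun r => H r j) ≤ ((smax : ℤ) : WithBot ℤ) := by
      refine cdegS_le fun r => ?_
      show degZ (H r j) + ((0 : ℤ) : WithBot ℤ) ≤ _
      rw [WithBot.coe_zero, add_zero]
      exact le_trans (hHdegZ r j) (WithBot.coe_le_coe.mpr (hsmaxle r))
    exact wb_le_cancel (hd0 i) (le_trans hp hcd)
  -- the unimodular matrix `W` with `N·W = [U; H]`
  set W : Matrix (Fin n) (Fin n) (Polynomial K) := B * U with hWdef
  have hWUnit : IsUnit W.det := by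
    rw [hWdef, Matrix.det_mul]
    exact hBUnit.mul hUdet
  have hNuW : Nu * (B * U) = U := by
    rw [← Matrix.mul_assoc, hNuB, Matrix.one_mul]
  have hNdW : Nd * (B * U) = H := by
    rw [← hFNu, Matrix.mul_assoc F Nu (B * U), ← Matrix.mul_assoc Nu B U, hNuB,
      Matrix.one_mul, hFU]
  have hNW : fromRows Nu Nd * W = fromRows U H := by
    rw [fromRows_mul, hWdef, hNuW, hNdW]
  -- the shifted column degrees `v` are nonpositive
  have hv0 : ∀ kk : Fin n, v kk ≤ 0 := by
    intro kk
    have hrow : ∃ j, W kk j ≠ 0 := by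
      by_contra hall
      push_neg at hall
      exact (hWUnit.ne_zero) (Matrix.det_eq_zero_of_row_eq_zero kk hall)
    obtain ⟨j, hWne⟩ := hrow
    have hp := pdp (Sum.elim (fun _ : Fin n => -(smax : ℤ)) fun i => -(s i : ℤ))
      (fromRows Nu Nd) v hNred (fun l => W l j) kk
    have hcol : (fromRows Nu Nd).mulVec (fun l => W l j) = fun r => (fromRows U H) r j := by
      funext r
      rw [← hNW, Matrix.mul_apply]
      rfl
    rw [hcol] at hp
    have hcd : cdegS (Sum.elim (fun _ : Fin n => -(smax : ℤ)) fun i => -(s i : ℤ))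
        (fun r => (fromRows U H) r j) ≤ ((0 : ℤ) : WithBot ℤ) := by
      refine cdegS_le fun r => ?_
      cases r with
      | inl i =>
        show degZ ((fromRows U H) (Sum.inl i) j) + ((-(smax : ℤ) : ℤ) : WithBot ℤ) ≤ _
        rw [Matrix.fromRows_apply_inl]
        exact wb_add_le_zero (hUle i j)
      | inr i =>
        show degZ ((fromRows U H) (Sum.inr i) j) + ((-(s i : ℤ) : ℤ) : WithBot ℤ) ≤ _
        rw [Matrix.fromRows_apply_inr]
        exact wb_add_le_zero (hHdegZ i j)
    exact wb_shift_nonpos (degZ_nonneg hWne) (le_trans hp hcd)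
  -- upper bound for degrees of entries of `N_d`
  have hNdle : ∀ i j, (Nd i j).degree ≤ ((s i : ℕ) : WithBot ℕ) := by
    intro i j
    have h1 := le_cdegS (Sum.elim (fun _ : Fin n => -(smax : ℤ)) fun i => -(s i : ℤ))
      (fun r => fromRows Nu Nd r j) (Sum.inr i)
    rw [hNred.1 j] at h1
    have h2 : degZ (Nd i j) + ((-(s i : ℤ) : ℤ) : WithBot ℤ) ≤ ((0 : ℤ) : WithBot ℤ) := by
      refine le_trans ?_ (WithBot.coe_le_coe.mpr (hv0 j))
      rw [← Matrix.fromRows_apply_inr Nu Nd i j]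
      exact h1
    have h3 := degZ_add_le_iff.mp h2
    have he : (0 : ℤ) - -(s i : ℤ) = (s i : ℤ) := by ring
    rw [he] at h3
    have h5 := degree_le_toNat_of_degZ_le h3
    rwa [Int.toNat_natCast] at h5
  -- determinant degree of `N_d`
  have hdetH : H.det = ∏ i, H i i :=
    Matrix.det_of_lowerTriangular H fun i j hij => hHlow i j hij
  have hprodM : (∏ i, H i i).Monic := monic_prod_of_monic _ _ fun i _ => hHmon i
  have hdegH : H.det.degree = ((∑ i, s i : ℕ) : WithBot ℕ) := by
    rw [hdetH, Polynomial.degree_prod, Nat.cast_sum]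
    exact Finset.sum_congr rfl fun i _ => hHii i
  have hdegV : V.det.degree = 0 := Polynomial.degree_eq_zero_of_isUnit hVUnit
  have hNdHV : Nd.det = H.det * V.det := by rw [← hHV, Matrix.det_mul]
  have hNdne : Nd.det ≠ 0 := by
    rw [hNdHV, hdetH]
    exact mul_ne_zero hprodM.ne_zero hVUnit.ne_zero
  have hNddeg : Nd.det.degree = ((∑ i, s i : ℕ) : WithBot ℕ) := by
    rw [hNdHV, Polynomial.degree_mul, hdegV, add_zero, hdegH]
  -- row degrees of `N_d`
  have hrdeg : ∀ i, rdeg Nd i = ((s i : ℕ) : WithBot ℕ) := by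
    intro i0
    refine le_antisymm (Finset.sup_le fun j _ => hNdle i0 j) ?_
    by_contra hlt
    push_neg at hlt
    have hjlt : ∀ j, (Nd i0 j).degree < ((s i0 : ℕ) : WithBot ℕ) := fun j =>
      lt_of_le_of_lt (Finset.le_sup (f := fun j => (Nd i0 j).degree) (Finset.mem_univ j)) hlt
    rcases Nat.eq_zero_or_pos (s i0) with hz | hpos
    · have hrow : ∀ j, Nd i0 j = 0 := by
        intro j
        have hj := hjlt j
        rw [hz, Nat.cast_zero] at hj
        exact Polynomial.degree_eq_bot.mp (Nat.WithBot.lt_zero_iff.mp hj)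
      exact hNdne (Matrix.det_eq_zero_of_row_eq_zero i0 hrow)
    · obtain ⟨m, hm⟩ : ∃ m, s i0 = m + 1 := ⟨s i0 - 1, by omega⟩
      have hble : ∀ i j, (Nd i j).degree ≤ ((if i = i0 then m else s i : ℕ) : WithBot ℕ) := by
        intro i j
        by_cases hii : i = i0
        · subst hii
          rw [if_pos rfl]
          exact degree_le_of_lt_succ (hm ▸ hjlt j)
        · rw [if_neg hii]
          exact hNdle i j
      have hdet := degree_det_le_sum Nd _ hble
      rw [hNddeg] at hdet
      have hsum : (∑ i, if i = i0 then m else s i) < ∑ i, s i := by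
        refine Finset.sum_lt_sum (fun i _ => ?_) ⟨i0, Finset.mem_univ i0, ?_⟩
        · by_cases hii : i = i0
          · subst hii; rw [if_pos rfl]; omega
          · rw [if_neg hii]
        · rw [if_pos rfl]; omega
      rw [Nat.cast_withBot, Nat.cast_withBot, WithBot.coe_le_coe] at hdet
      omega
  exact ⟨hNuUnit, hrdeg, ⟨V, hVUnit, hHV⟩, hFNu⟩
end

section
/- Let K be a field, let H ∈ K[x]^{n×n} be in Hermite normal form, and let A ∈ K[x]^{n×k} be a matrix such that H is a column basis of A and the row degrees of A equal the row degrees of H (namely s = (deg h_11,…,deg h_nn)). Then there exists a constant matrix B ∈ K^{n×k} of rank n with A = H·B, and consequently there exists an invertible constant matrix U ∈ K^{k×k} such that A·U = [H, 0], i.e. the principal n×n submatrix of A·U is H and the remaining columns are zero. -/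
open Polynomial Matrix

variable {K : Type*} [Field K]

private lemma aux_deg_le_zero {p q : Polynomial K} (hp : p.Monic)
    (h : (p * q).degree ≤ p.degree) : q.degree ≤ 0 := by
  by_cases hq : q = 0
  · simp [hq]
  · rw [Polynomial.degree_mul, Polynomial.degree_eq_natDegree hp.ne_zero,
      Polynomial.degree_eq_natDegree hq] at h
    rw [Polynomial.degree_eq_natDegree hq]
    have : p.natDegree + q.natDegree ≤ p.natDegree := by exact_mod_cast h
    have h0 : q.natDegree = 0 := by omega
    simp [h0]

/-- Lemma 3: if `H` (in Hermite normal form) is a column basis of `A` and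
`A` has the same row degrees as `H`, then `A = H·B` for a constant matrix `B` of rank `n`,
and some invertible constant matrix `U` brings `A` to the form `[H, 0]`. -/
theorem recover_hermite_from_column_basis {n k : ℕ}
    (H : Matrix (Fin n) (Fin n) (Polynomial K)) (hH : IsHermiteForm H)
    (A : Matrix (Fin n) (Fin k) (Polynomial K)) (hCB : IsColBasis A H)
    (hrd : ∀ i, rdeg A i = (H i i).degree) :
    (∃ B : Matrix (Fin n) (Fin k) K, B.rank = n ∧ A = H * B.map Polynomial.C) ∧
    ∃ U : Matrix (Fin k) (Fin k) K, IsUnit U.det ∧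
      ∀ (i : Fin n) (j : Fin k),
        (A * U.map Polynomial.C) i j = if h : (j : ℕ) < n then H i ⟨(j : ℕ), h⟩ else 0 := by
  classical
  obtain ⟨hlow, hmono, hdeg⟩ := hH
  obtain ⟨hindep, hspan⟩ := hCB
  have hHii : ∀ i : Fin n, (H i i).degree ≠ ⊥ := fun i =>
    Polynomial.degree_ne_bot.mpr (hmono i).ne_zero
  -- Step 1: A = H * M' for a polynomial matrix M'
  have hMex : ∀ j : Fin k, ∃ p, H.mulVec p = fun i => A i j := fun j =>
    (hspan _).mp ⟨Pi.single j 1, by funext i; simp⟩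
  choose M hM using hMex
  set M' : Matrix (Fin n) (Fin k) (Polynomial K) := Matrix.of fun i j => M j i with hM'def
  have hA : A = H * M' := by
    ext i j : 1
    rw [Matrix.mul_apply]
    exact (congrFun (hM j) i).symm
  -- Step 2: degree bound on M'
  have hAdeg : ∀ (i : Fin n) (j : Fin k), (A i j).degree ≤ (H i i).degree := by
    intro i j
    rw [← hrd i, rdeg]
    exact Finset.le_sup (f := fun j => (A i j).degree) (Finset.mem_univ j)
  have hMdegN : ∀ N : ℕ, ∀ i : Fin n, (i : ℕ) = N → ∀ j, (M' i j).degree ≤ 0 := by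
    intro N
    induction N using Nat.strong_induction_on with
    | _ N IH =>
      rintro i rfl j
      have IH' : ∀ l : Fin n, l < i → ∀ j, (M' l j).degree ≤ 0 := fun l hl =>
        IH l.val hl l rfl
      have hsum : A i j = ∑ l, H i l * M' l j := by rw [hA, Matrix.mul_apply]
      have hsplit : A i j = H i i * M' i j + ∑ l ∈ Finset.univ.erase i, H i l * M' l j := by
        rw [hsum, ← Finset.add_sum_erase _ _ (Finset.mem_univ i)]
      have hrest : (∑ l ∈ Finset.univ.erase i, H i l * M' l j).degree < (H i i).degree := by
        refine lt_of_le_of_lt (Polynomial.degree_sum_le _ _) ?_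
        rw [Finset.sup_lt_iff (Ne.bot_lt (hHii i))]
        intro l hl
        rcases lt_or_gt_of_ne (Finset.ne_of_mem_erase hl) with h | h
        · calc (H i l * M' l j).degree ≤ (H i l).degree + (M' l j).degree :=
                Polynomial.degree_mul_le _ _
            _ ≤ (H i l).degree + 0 := add_le_add_right (IH' l h j) _
            _ = (H i l).degree := add_zero _
            _ < (H i i).degree := hdeg i l h
        · rw [hlow i l h, zero_mul, Polynomial.degree_zero]
          exact Ne.bot_lt (hHii i)
      have hprod : (H i i * M' i j).degree ≤ (H i i).degree := by
        have heq : H i i * M' i j = A i j - ∑ l ∈ Finset.univ.erase i, H i l * M' l j := by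
          rw [hsplit]; ring
        rw [heq]
        exact le_trans (Polynomial.degree_sub_le _ _) (max_le (hAdeg i j) hrest.le)
      exact aux_deg_le_zero (hmono i) hprod
  have hMdeg : ∀ (i : Fin n) (j : Fin k), (M' i j).degree ≤ 0 := fun i j =>
    hMdegN i.val i rfl j
  -- Step 3: B
  set B : Matrix (Fin n) (Fin k) K := Matrix.of fun i j => (M' i j).coeff 0 with hBdef
  have hBC : M' = B.map Polynomial.C := by
    ext i j : 1
    exact Polynomial.eq_C_of_degree_le_zero (hMdeg i j)
  have hA' : A = H * B.map Polynomial.C := by rw [hA, hBC]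
  -- Step 4: H cancellation
  have hHcancel : ∀ v : Fin n → Polynomial K, H.mulVec v = 0 → v = 0 := by
    intro v hv
    have h0 : ∑ jj, v jj • (fun ii => H ii jj) = (0 : Fin n → Polynomial K) := by
      funext ii
      rw [Finset.sum_apply]
      simpa [Matrix.mulVec, dotProduct, mul_comm] using congrFun hv ii
    exact funext (Fintype.linearIndependent_iff.mp hindep v h0)
  -- Step 5: H = A * P'
  have hPex : ∀ j : Fin n, ∃ p, A.mulVec p = fun i => H i j := fun j =>
    (hspan _).mpr ⟨Pi.single j 1, by funext i; simp⟩
  choose P hP using hPex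
  set P' : Matrix (Fin k) (Fin n) (Polynomial K) := Matrix.of fun i j => P j i with hP'def
  have hHAP : H = A * P' := by
    ext i j : 1
    rw [Matrix.mul_apply]
    exact (congrFun (hP j) i).symm
  -- Step 6: (B.map C) * P' = 1
  have hprod1 : (B.map Polynomial.C) * P' = 1 := by
    set D : Matrix (Fin n) (Fin n) (Polynomial K) := B.map Polynomial.C * P' - 1 with hDdef
    have h1 : H * D = 0 := by
      rw [hDdef, Matrix.mul_sub, Matrix.mul_one, ← Matrix.mul_assoc, ← hA', ← hHAP, sub_self]
    have h2 : ∀ j, (fun i => D i j) = 0 := by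
      intro j
      apply hHcancel
      funext i
      have h1ij := congrFun (congrFun h1 i) j
      rw [Matrix.mul_apply] at h1ij
      simpa [Matrix.mulVec, dotProduct] using h1ij
    have hD : D = 0 := by
      ext i j : 1
      exact congrFun (h2 j) i
    rw [hDdef, sub_eq_zero] at hD
    exact hD
  -- Step 7: evaluate at 0 to get B * P0 = 1
  set φ : Polynomial K →+* K := Polynomial.evalRingHom 0 with hφ
  set P0 : Matrix (Fin k) (Fin n) K := P'.map φ with hP0
  have hBP0 : B * P0 = 1 := by
    have h := congrArg (fun X : Matrix (Fin n) (Fin n) (Polynomial K) => X.map φ) hprod1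
    simp only [Matrix.map_mul] at h
    rw [Matrix.map_one φ (map_zero φ) (map_one φ)] at h
    have hBmap : (B.map Polynomial.C).map φ = B := by
      ext i j
      simp [Matrix.map_apply, hφ]
    rwa [hBmap] at h
  -- Step 8: B has rank n
  set f := B.mulVecLin with hf
  have hfsurj : Function.Surjective f := by
    intro v
    exact ⟨P0.mulVec v, by
      rw [hf, Matrix.mulVecLin_apply, Matrix.mulVec_mulVec, hBP0, Matrix.one_mulVec]⟩
  have hrange : LinearMap.range f = ⊤ := LinearMap.range_eq_top.mpr hfsurj
  have hrank : B.rank = n := by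
    rw [Matrix.rank, ← hf, hrange, finrank_top, Module.finrank_fin_fun]
  -- Step 9: construct U
  obtain ⟨g, hg⟩ := f.exists_rightInverse_of_surjective hrange
  have hd : n + Module.finrank K (LinearMap.ker f) = k := by
    have h := LinearMap.finrank_range_add_finrank_ker f
    rw [hrange, finrank_top, Module.finrank_fin_fun, Module.finrank_fin_fun] at h
    exact h
  set d := Module.finrank K (LinearMap.ker f) with hdd
  let bb : Module.Basis (Fin d) K (LinearMap.ker f) := Module.finBasis K _
  set U : Matrix (Fin k) (Fin k) K := Matrix.of fun i j =>
    if h : (j : ℕ) < n then g (Pi.single ⟨(j : ℕ), h⟩ 1) i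
    else ((bb ⟨(j : ℕ) - n, by have := j.isLt; omega⟩ : Fin k → K)) i with hU
  -- columns of U
  have hcolU : ∀ j : Fin k, B.mulVec (fun l => U l j) =
      if h : (j : ℕ) < n then Pi.single (⟨(j : ℕ), h⟩ : Fin n) 1 else 0 := by
    intro j
    by_cases h : (j : ℕ) < n
    · rw [dif_pos h]
      have hcol : (fun l => U l j) = g (Pi.single (⟨(j : ℕ), h⟩ : Fin n) 1) := by
        funext l
        simp only [hU, Matrix.of_apply, dif_pos h]
      rw [hcol]
      have hx := LinearMap.congr_fun hg (Pi.single (⟨(j : ℕ), h⟩ : Fin n) 1)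
      simpa [hf, Matrix.mulVecLin_apply] using hx
    · rw [dif_neg h]
      have hcol : (fun l => U l j) =
          ((bb ⟨(j : ℕ) - n, by have := j.isLt; omega⟩ : LinearMap.ker f) : Fin k → K) := by
        funext l
        simp only [hU, Matrix.of_apply, dif_neg h]
      rw [hcol]
      have hmem := (bb ⟨(j : ℕ) - n, by have := j.isLt; omega⟩).2
      rw [LinearMap.mem_ker] at hmem
      exact hmem
  have hBU : ∀ (l : Fin n) (j : Fin k), (B * U) l j =
      if h : (j : ℕ) < n then (if l = ⟨(j : ℕ), h⟩ then (1 : K) else 0) else 0 := by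
    intro l j
    have hentry : (B * U) l j = B.mulVec (fun t => U t j) l := by
      rw [Matrix.mul_apply]
      simp [Matrix.mulVec, dotProduct]
    rw [hentry, hcolU j]
    by_cases h : (j : ℕ) < n
    · rw [dif_pos h, dif_pos h, Pi.single_apply]
    · rw [dif_neg h, dif_neg h]
      rfl
  -- Step 10: kernel of U is trivial
  have hnk : n ≤ k := by omega
  have hker : ∀ c : Fin k → K, U.mulVec c = 0 → c = 0 := by
    intro c hc
    have h2 : (B * U).mulVec c = 0 := by
      rw [← Matrix.mulVec_mulVec, hc, Matrix.mulVec_zero]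
    have hcn : ∀ j : Fin k, (j : ℕ) < n → c j = 0 := by
      intro j hj
      have h4 : ∑ t : Fin k, (B * U) ⟨(j : ℕ), hj⟩ t * c t = 0 := congrFun h2 ⟨(j : ℕ), hj⟩
      rw [Finset.sum_eq_single j] at h4
      · have h5 : (B * U) ⟨(j : ℕ), hj⟩ j = 1 := by rw [hBU, dif_pos hj, if_pos rfl]
        rwa [h5, one_mul] at h4
      · intro t _ hne
        rw [hBU]
        split_ifs with h h'
        · exact absurd (Fin.ext (by simpa using (congrArg Fin.val h').symm)) hne
        · exact zero_mul _
        · exact zero_mul _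
      · intro hmem
        exact absurd (Finset.mem_univ _) hmem
    have hli : LinearIndependent K (fun t : Fin d => ((bb t : Fin k → K))) :=
      bb.linearIndependent.map' (LinearMap.ker f).subtype (Submodule.ker_subtype _)
    have hcd : ∀ t : Fin d, c ⟨n + (t : ℕ), by have := t.isLt; omega⟩ = 0 := by
      have hsum : ∑ t : Fin d,
          c ⟨n + (t : ℕ), by have := t.isLt; omega⟩ • ((bb t : Fin k → K)) = 0 := by
        funext l
        simp only [Finset.sum_apply, Pi.zero_apply]
        have h8 : ∑ jj : Fin k, U l jj * c jj = 0 := congrFun hc l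
        rw [← Fintype.sum_equiv (finCongr hd)
          (fun jj => U l (finCongr hd jj) * c (finCongr hd jj))
          (fun jj => U l jj * c jj) (fun jj => rfl)] at h8
        rw [Fin.sum_univ_add] at h8
        have hz1 : ∑ i : Fin n, U l (finCongr hd (Fin.castAdd d i)) *
            c (finCongr hd (Fin.castAdd d i)) = 0 :=
          Finset.sum_eq_zero fun i _ => by
            rw [hcn _ (by simp), mul_zero]
        rw [hz1, zero_add] at h8
        rw [← h8]
        refine Finset.sum_congr rfl fun t _ => ?_
        have hval : ((finCongr hd (Fin.natAdd n t) : Fin k) : ℕ) = n + (t : ℕ) := rfl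
        have hUval : U l (finCongr hd (Fin.natAdd n t)) = (bb t : Fin k → K) l := by
          simp only [hU, Matrix.of_apply]
          rw [dif_neg (by omega : ¬ ((finCongr hd (Fin.natAdd n t) : Fin k) : ℕ) < n)]
          have hidx : (⟨((finCongr hd (Fin.natAdd n t) : Fin k) : ℕ) - n,
              by have := (finCongr hd (Fin.natAdd n t)).isLt; omega⟩ : Fin d) = t :=
            Fin.ext (show n + (t : ℕ) - n = (t : ℕ) by omega)
          rw [hidx]
        have hcval : c (finCongr hd (Fin.natAdd n t)) =
            c ⟨n + (t : ℕ), by have := t.isLt; omega⟩ := rfl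
        rw [hUval, hcval, Pi.smul_apply, smul_eq_mul, mul_comm]
      exact Fintype.linearIndependent_iff.mp hli _ hsum
    funext j
    by_cases hj : (j : ℕ) < n
    · exact hcn j hj
    · have ht := hcd ⟨(j : ℕ) - n, by have := j.isLt; omega⟩
      have hj' : j = (⟨n + ((j : ℕ) - n), by have := j.isLt; omega⟩ : Fin k) :=
        Fin.ext (by simp; omega)
      rw [hj']
      exact ht
  have hUinj : Function.Injective U.mulVec := by
    intro a b hab
    have h0 : U.mulVec (a - b) = 0 := by
      rw [Matrix.mulVec_sub, hab, sub_self]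
    have := hker _ h0
    rwa [sub_eq_zero] at this
  have hUdet : IsUnit U.det :=
    (Matrix.isUnit_iff_isUnit_det U).mp (Matrix.mulVec_injective_iff_isUnit.mp hUinj)
  -- Step 11: conclude
  refine ⟨⟨B, hrank, hA'⟩, U, hUdet, ?_⟩
  intro i j
  have hAU : A * U.map Polynomial.C = H * ((B * U).map Polynomial.C) := by
    rw [hA', Matrix.mul_assoc, ← Matrix.map_mul]
  rw [hAU, Matrix.mul_apply]
  by_cases h : (j : ℕ) < n
  · rw [dif_pos h]
    rw [Finset.sum_eq_single (⟨(j : ℕ), h⟩ : Fin n)]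
    · rw [Matrix.map_apply, hBU, dif_pos h, if_pos rfl, Polynomial.C_1, mul_one]
    · intro l _ hne
      rw [Matrix.map_apply, hBU, dif_pos h, if_neg hne, Polynomial.C_0, mul_zero]
    · intro hmem
      exact absurd (Finset.mem_univ _) hmem
  · rw [dif_neg h]
    refine Finset.sum_eq_zero fun l _ => ?_
    rw [Matrix.map_apply, hBU, dif_neg h, Polynomial.C_0, mul_zero]
end
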